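/- In a complete structured DNNF where ⊤- and ⊥-gates are never inputs, for any ∪-gate g, the recursive enumeration scheme that iterates over all var-gates and ×-gates g' with a ∪-only path to g, outputting S_var(g') for var-gates and all unions S_L ∪ S_R over recursive enumerations of the left and right inputs for ×-gates, produces exactly the multiset-support equal to S(g): every element of S(g) is produced at least once and every produced set belongs to S(g). -/
import Mathlib


/-- Positions in binary trees (paths from the root; `false` = left, `true` = right). -/
abbrev BPos := List Bool

inductive GateType where
  | top | bot | var | times | cup
deriving DecidableEq

/-- A set circuit: a DAG of gates typed ⊤, ⊥, var, ×, ∪.  `wire g' g` means `g'` is an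
input of `g`. -/
structure SetCircuit (V G : Type) where
  gtype : G → GateType
  wire : G → G → Prop
  varLabel : G → Set V
  varLabel_inj : ∀ g g', gtype g = GateType.var → gtype g' = GateType.var →
      varLabel g = varLabel g' → g = g'
  source_no_input : ∀ g, (gtype g = GateType.top ∨ gtype g = GateType.bot ∨
      gtype g = GateType.var) → ∀ g', ¬ wire g' g
  const_no_output : ∀ g, (gtype g = GateType.top ∨ gtype g = GateType.bot) → ∀ g', ¬ wire g g'
  times_two : ∀ g, gtype g = GateType.times → ∃ g₁ g₂, g₁ ≠ g₂ ∧ wire g₁ g ∧ wire g₂ g ∧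
      ∀ g', wire g' g → g' = g₁ ∨ g' = g₂
  cup_one : ∀ g, gtype g = GateType.cup → ∃ g', wire g' g

/-- `Captures C g S` : the set `S` of variables belongs to the set `S(g)` captured by
gate `g`, following the inductive semantics of set circuits. -/
inductive Captures {V G : Type} (C : SetCircuit V G) : G → Set V → Prop
  | var {g} : C.gtype g = GateType.var → Captures C g (C.varLabel g)
  | top {g} : C.gtype g = GateType.top → Captures C g ∅
  | times {g g₁ g₂ S₁ S₂} : C.gtype g = GateType.times → C.wire g₁ g → C.wire g₂ g →
      g₁ ≠ g₂ → Captures C g₁ S₁ → Captures C g₂ S₂ → Captures C g (S₁ ∪ S₂)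
  | cup {g g' S} : C.gtype g = GateType.cup → C.wire g' g → Captures C g' S → Captures C g S

/-- `CupPath C g' g` : there is a wire-path from `g'` to `g` all of whose gates strictly
between `g'` and `g` are ∪-gates. -/
inductive CupPath {V G : Type} (C : SetCircuit V G) : G → G → Prop
  | single {g' g} : C.wire g' g → CupPath C g' g
  | cons {g' m g} : C.wire g' m → C.gtype m = GateType.cup → CupPath C m g → CupPath C g' g

/-- A v-tree: a binary tree whose leaves are labeled by sets of variables. -/
inductive VTree (V : Type) where
  | leaf (vars : Set V)
  | node (l r : VTree V)

/-- The subtree of a v-tree at a position (if any). -/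
def VTree.sub {V : Type} : VTree V → BPos → Option (VTree V)
  | t, [] => some t
  | VTree.leaf _, _ :: _ => none
  | VTree.node l r, b :: p => VTree.sub (if b then r else l) p

/-- Variables occurring in (the leaves of) a v-tree. -/
def VTree.vars {V : Type} : VTree V → Set V
  | VTree.leaf vs => vs
  | VTree.node l r => l.vars ∪ r.vars

/-- Variables occurring below a given position of a v-tree. -/
def VTree.varsAt {V : Type} (t : VTree V) (p : BPos) : Set V :=
  match t.sub p with
  | some s => s.vars
  | none => ∅

/-- A complete structured DNNF: a set circuit together with a v-tree and a structuring
function `σ` mapping each gate to a (valid) position of the v-tree (its box). -/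
structure StructuredDNNF (V G : Type) extends SetCircuit V G where
  vtree : VTree V
  σ : G → BPos
  σ_valid : ∀ g, (vtree.sub (σ g)).isSome
  var_leaf : ∀ g, gtype g = GateType.var →
      ∃ vs, vtree.sub (σ g) = some (VTree.leaf vs) ∧ varLabel g ⊆ vs
  var_nonempty : ∀ g, gtype g = GateType.var → (varLabel g).Nonempty
  wire_struct : ∀ g' g, wire g' g →
      σ g' = σ g ∨ (gtype g' = GateType.cup ∧ ∃ b, σ g' = σ g ++ [b])
  times_children : ∀ g, gtype g = GateType.times →
      (∃ g₁, wire g₁ g ∧ σ g₁ = σ g ++ [false]) ∧ (∃ g₂, wire g₂ g ∧ σ g₂ = σ g ++ [true])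
  leaves_disjoint : ∀ p₁ p₂ vs₁ vs₂, vtree.sub p₁ = some (VTree.leaf vs₁) →
      vtree.sub p₂ = some (VTree.leaf vs₂) → p₁ ≠ p₂ → Disjoint vs₁ vs₂

/-- `Produced D g S` : the recursive enumeration scheme started at gate `g` outputs the
set `S`: it iterates over the var-gates and ×-gates with a ∪-only path to `g`,
outputting the label of var-gates, and for ×-gates all unions `S₁ ∪ S₂` obtained by
recursively enumerating the left and right inputs. -/
inductive Produced {V G : Type} (D : StructuredDNNF V G) : G → Set V → Prop
  | var {g g'} : D.gtype g' = GateType.var → CupPath D.toSetCircuit g' g →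
      Produced D g (D.varLabel g')
  | times {g g' g₁ g₂ S₁ S₂} : D.gtype g' = GateType.times → CupPath D.toSetCircuit g' g →
      D.wire g₁ g' → D.σ g₁ = D.σ g' ++ [false] →
      D.wire g₂ g' → D.σ g₂ = D.σ g' ++ [true] →
      Produced D g₁ S₁ → Produced D g₂ S₂ → Produced D g (S₁ ∪ S₂)

lemma child_cup {V G : Type} (D : StructuredDNNF V G) {g' g : G} {b : Bool}
    (hw : D.wire g' g) (hσ : D.σ g' = D.σ g ++ [b]) : D.gtype g' = GateType.cup := by
  rcases D.wire_struct g' g hw with h | ⟨h, _⟩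
  · exfalso; rw [hσ] at h; simpa using congrArg List.length h
  · exact h

lemma cupPath_snoc {V G : Type} (C : SetCircuit V G) {h g' g : G}
    (hp : CupPath C h g') (hcup : C.gtype g' = GateType.cup) (hw : C.wire g' g) :
    CupPath C h g := by
  induction hp with
  | single hw' => exact CupPath.cons hw' hcup (CupPath.single hw)
  | cons hw' hm _ ih => exact CupPath.cons hw' hm (ih hcup hw)

lemma lift_cap {V G : Type} (C : SetCircuit V G) {g' g : G} {S : Set V}
    (hp : CupPath C g' g) (hc : C.gtype g = GateType.cup) (hcap : Captures C g' S) :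
    Captures C g S := by
  induction hp with
  | single hw => exact Captures.cup hc hw hcap
  | cons hw hm hp ih => exact ih hc (Captures.cup hm hw hcap)

lemma produced_snoc {V G : Type} (D : StructuredDNNF V G) {g' g : G} {S : Set V}
    (hprod : Produced D g' S) (hcup : D.gtype g' = GateType.cup) (hw : D.wire g' g) :
    Produced D g S := by
  induction hprod with
  | var hv hp => exact Produced.var hv (cupPath_snoc _ hp hcup hw)
  | times ht hp hw1 hσ1 hw2 hσ2 p1 p2 _ _ =>
      exact Produced.times ht (cupPath_snoc _ hp hcup hw) hw1 hσ1 hw2 hσ2 p1 p2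

lemma prod_to_cap {V G : Type} (D : StructuredDNNF V G) {g : G} {S : Set V}
    (hprod : Produced D g S) (hc : D.gtype g = GateType.cup) :
    Captures D.toSetCircuit g S := by
  induction hprod with
  | var hv hp => exact lift_cap _ hp hc (Captures.var hv)
  | @times g g' g₁ g₂ S₁ S₂ ht hp hw1 hσ1 hw2 hσ2 _ _ ih1 ih2 =>
      have hc1 := child_cup D hw1 hσ1
      have hc2 := child_cup D hw2 hσ2
      have hne : g₁ ≠ g₂ := by
        intro h; rw [h, hσ2] at hσ1; simpa using hσ1
      exact lift_cap _ hp hc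
        (Captures.times ht hw1 hw2 hne (ih1 hc1) (ih2 hc2))

set_option maxHeartbeats 1000000 in
lemma cap_to_prod {V G : Type} (D : StructuredDNNF V G) {g : G} {S : Set V}
    (hcap : Captures D.toSetCircuit g S) :
    (D.gtype g = GateType.cup → Produced D g S) ∧
    (D.gtype g = GateType.times → ∀ gL gR, D.wire gL g → D.σ gL = D.σ g ++ [false] →
      D.wire gR g → D.σ gR = D.σ g ++ [true] →
      ∃ SL SR, S = SL ∪ SR ∧ Produced D gL SL ∧ Produced D gR SR) := by
  induction hcap with
  | @var g hv =>
      constructor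
      · intro h; rw [hv] at h; exact absurd h (by decide)
      · intro h; rw [hv] at h; exact absurd h (by decide)
  | @top g hv =>
      constructor
      · intro h; rw [hv] at h; exact absurd h (by decide)
      · intro h; rw [hv] at h; exact absurd h (by decide)
  | @times g g₁ g₂ S₁ S₂ ht hw1 hw2 hne hcap1 hcap2 ih1 ih2 =>
      constructor
      · intro h; rw [ht] at h; exact absurd h (by decide)
      · intro _ gL gR hwL hσL hwR hσR
        obtain ⟨a, b, hab, hwa, hwb, huniq⟩ := D.times_two g ht
        have hcL := child_cup D hwL hσL
        have hcR := child_cup D hwR hσR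
        have hLR : gL ≠ gR := by
          intro h; rw [h, hσR] at hσL; simpa using hσL
        have hcase : (g₁ = gL ∧ g₂ = gR) ∨ (g₁ = gR ∧ g₂ = gL) := by
          rcases huniq g₁ hw1 with rfl | rfl <;> rcases huniq g₂ hw2 with rfl | rfl <;>
            rcases huniq gL hwL with rfl | rfl <;> rcases huniq gR hwR with rfl | rfl <;>
            tauto
        rcases hcase with ⟨rfl, rfl⟩ | ⟨rfl, rfl⟩
        · exact ⟨S₁, S₂, rfl, ih1.1 hcL, ih2.1 hcR⟩
        · exact ⟨S₂, S₁, Set.union_comm _ _, ih2.1 hcL, ih1.1 hcR⟩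
  | @cup g g' S hc hw hcap ih =>
      constructor
      · intro _
        cases hg' : D.gtype g' with
        | top => exact absurd hw (D.const_no_output g' (Or.inl hg') g)
        | bot => exact absurd hw (D.const_no_output g' (Or.inr hg') g)
        | var =>
            cases hcap with
            | var hv => exact Produced.var hv (CupPath.single hw)
            | top h => rw [hg'] at h; exact absurd h (by decide)
            | times h => rw [hg'] at h; exact absurd h (by decide)
            | cup h => rw [hg'] at h; exact absurd h (by decide)
        | times =>
            obtain ⟨⟨gL, hwL, hσL⟩, ⟨gR, hwR, hσR⟩⟩ := D.times_children g' hg'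
            obtain ⟨SL, SR, rfl, pL, pR⟩ := ih.2 hg' gL gR hwL hσL hwR hσR
            exact Produced.times hg' (CupPath.single hw) hwL hσL hwR hσR pL pR
        | cup => exact produced_snoc D (ih.1 hg') hg' hw
      · intro h; rw [hc] at h; exact absurd h (by decide)

/-- for a ∪-gate `g`, the recursive enumeration scheme produces exactly
the captured set `S(g)`: everything produced is in `S(g)` and everything in `S(g)` is
produced (at least once). -/
theorem stmt17 {V G : Type} (D : StructuredDNNF V G) (g : G)
    (hg : D.gtype g = GateType.cup) :
    ∀ S : Set V, Produced D g S ↔ Captures D.toSetCircuit g S := by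
  intro S
  exact ⟨fun h => prod_to_cap D h hg, fun h => (cap_to_prod D h).1 hg⟩
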